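/- Let $u_1, u_2$ be the SPPS solutions of $(p u')' + q u = \omega^2 u$ normalized so that $u_2 = g_0 \sum_{\text{odd } n} \frac{\omega^{n-1}}{n!} X^{(n)}$. For the Dirichlet spectral problem $u(0) = u(1) = 0$ on $(0,1)$, $\omega^2$ is an eigenvalue if and only if $\omega$ is a zero of the entire/analytic function $\kappa(\omega) = \sum_{\text{even } m \geq 0} \frac{g_0(1) X^{(m+1)}(1)}{(m+1)!} \omega^m$, i.e., nontrivial solutions with $u(0)=u(1)=0$ exist exactly when $\kappa(\omega) = 0$. -/

import Mathlib

set_option maxHeartbeats 1000000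


open scoped Nat
open Set intervalIntegral Filter

/-- The SPPS recursive integrals: `spps wodd weven 0 ≡ 1` and
`spps wodd weven n x = n ∫₀ˣ spps wodd weven (n-1) · w`, where the weight `w`
is `wodd` when `n` is odd and `weven` when `n` is even. -/
noncomputable def spps (wodd weven : ℝ → ℂ) : ℕ → ℝ → ℂ
  | 0 => fun _ => 1
  | n + 1 => fun x => (n + 1 : ℂ) *
      ∫ t in (0:ℝ)..x,
        spps wodd weven n t * (if (n + 1) % 2 = 1 then wodd t else weven t)

lemma spps_zero (w1 w2 : ℝ → ℂ) (x : ℝ) : spps w1 w2 0 x = 1 := rfl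

lemma spps_succ (w1 w2 : ℝ → ℂ) (n : ℕ) (x : ℝ) :
    spps w1 w2 (n + 1) x = (n + 1 : ℂ) *
      ∫ t in (0:ℝ)..x, spps w1 w2 n t * (if (n + 1) % 2 = 1 then w1 t else w2 t) := rfl

lemma spps_succ_at_zero (w1 w2 : ℝ → ℂ) (n : ℕ) : spps w1 w2 (n + 1) 0 = 0 := by
  rw [spps_succ, intervalIntegral.integral_same, mul_zero]

lemma integral_abs_pow (n : ℕ) (x : ℝ) :
    ∫ t in (0:ℝ)..x, |t| ^ n = |x| ^ n * x / (n + 1) := by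
  rcases le_or_gt 0 x with hx | hx
  · have h1 : EqOn (fun t : ℝ => |t| ^ n) (fun t : ℝ => t ^ n) (uIcc (0:ℝ) x) := by
      intro t ht
      rw [uIcc_of_le hx] at ht
      simp [abs_of_nonneg ht.1]
    rw [intervalIntegral.integral_congr h1, integral_pow, abs_of_nonneg hx]
    ring
  · have key : ∫ t in (0:ℝ)..x, |t| ^ n = - ∫ t in (0:ℝ)..(-x), |t| ^ n := by
      have := intervalIntegral.integral_comp_neg (a := (0:ℝ)) (b := x) (fun t => |t| ^ n)
      simp only [abs_neg, neg_zero] at this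
      rw [this, intervalIntegral.integral_symm]
    rw [key]
    have hx' : (0:ℝ) ≤ -x := by linarith
    have h1 : EqOn (fun t : ℝ => |t| ^ n) (fun t : ℝ => t ^ n) (uIcc (0:ℝ) (-x)) := by
      intro t ht
      rw [uIcc_of_le hx'] at ht
      simp [abs_of_nonneg ht.1]
    rw [intervalIntegral.integral_congr h1, integral_pow, abs_of_neg hx]
    ring

section props
variable {a b : ℝ} (ha : a < 0) (hb : 0 < b) {w1 w2 : ℝ → ℂ}
    (h1 : ContinuousOn w1 (Ioo a b)) (h2 : ContinuousOn w2 (Ioo a b))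

include ha hb h1 h2

lemma spps_cont_deriv :
    ∀ n : ℕ, ContinuousOn (spps w1 w2 n) (Ioo a b) ∧
      (∀ x ∈ Ioo a b, HasDerivAt (spps w1 w2 (n + 1))
        ((n + 1 : ℂ) * (spps w1 w2 n x * (if (n + 1) % 2 = 1 then w1 x else w2 x))) x) := by
  have hopen : IsOpen (Ioo a b) := isOpen_Ioo
  have key : ∀ n : ℕ, ContinuousOn (spps w1 w2 n) (Ioo a b) →
      (∀ x ∈ Ioo a b, HasDerivAt (spps w1 w2 (n + 1))
        ((n + 1 : ℂ) * (spps w1 w2 n x * (if (n + 1) % 2 = 1 then w1 x else w2 x))) x) := by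
    intro n hcont x hx
    set G : ℝ → ℂ := fun t => spps w1 w2 n t * (if (n + 1) % 2 = 1 then w1 t else w2 t) with hG
    have hGcont : ContinuousOn G (Ioo a b) := by
      rcases Nat.eq_zero_or_pos ((n + 1) % 2) with h | h
      · simp only [hG, h]
        exact hcont.mul (by simpa using h2)
      · have : (n + 1) % 2 = 1 := by omega
        simp only [hG, this]
        exact hcont.mul (by simpa using h1)
    have hsub : uIcc (0:ℝ) x ⊆ Ioo a b :=
      (Set.ordConnected_Ioo).uIcc_subset ⟨ha, hb⟩ hx
    have hInt : HasDerivAt (fun u => ∫ t in (0:ℝ)..u, G t) (G x) x :=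
      intervalIntegral.integral_hasDerivAt_right
        ((hGcont.mono hsub).intervalIntegrable)
        (hGcont.stronglyMeasurableAtFilter hopen x hx)
        (hGcont.continuousAt (hopen.mem_nhds hx))
    exact hInt.const_mul ((n : ℂ) + 1)
  intro n
  induction n with
  | zero =>
    exact ⟨continuousOn_const, key 0 continuousOn_const⟩
  | succ n ih =>
    have hcont : ContinuousOn (spps w1 w2 (n + 1)) (Ioo a b) :=
      continuousOn_of_forall_continuousAt fun x hx => (ih.2 x hx).continuousAt
    exact ⟨hcont, key (n + 1) hcont⟩

omit h1 h2 in
lemma spps_bound (h1 : ContinuousOn w1 (Ioo a b)) (h2 : ContinuousOn w2 (Ioo a b))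
    {C : ℝ} (hC0 : 0 ≤ C)
    (hC1 : ∀ x ∈ Ioo a b, ‖w1 x‖ ≤ C) (hC2 : ∀ x ∈ Ioo a b, ‖w2 x‖ ≤ C) :
    ∀ n : ℕ, ∀ x ∈ Ioo a b, ‖spps w1 w2 n x‖ ≤ C ^ n * |x| ^ n := by
  intro n
  induction n with
  | zero => intro x _; simp [spps]
  | succ n ih =>
    intro x hx
    have hsub : uIcc (0:ℝ) x ⊆ Ioo a b :=
      (Set.ordConnected_Ioo).uIcc_subset ⟨ha, hb⟩ hx
    have hbd : ∀ t ∈ Set.uIoc (0:ℝ) x,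
        ‖spps w1 w2 n t * (if (n + 1) % 2 = 1 then w1 t else w2 t)‖ ≤
          C ^ (n + 1) * |t| ^ n := by
      intro t ht
      have htm : t ∈ Ioo a b := hsub (Set.uIoc_subset_uIcc ht)
      rw [norm_mul]
      have hw : ‖(if (n + 1) % 2 = 1 then w1 t else w2 t)‖ ≤ C := by
        split
        · exact hC1 t htm
        · exact hC2 t htm
      calc ‖spps w1 w2 n t‖ * ‖(if (n + 1) % 2 = 1 then w1 t else w2 t)‖
          ≤ (C ^ n * |t| ^ n) * C := by
            apply mul_le_mul (ih t htm) hw (norm_nonneg _)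
            positivity
        _ = C ^ (n + 1) * |t| ^ n := by ring
    have hgint : IntervalIntegrable (fun t => C ^ (n + 1) * |t| ^ n) MeasureTheory.volume 0 x :=
      (Continuous.intervalIntegrable (by continuity) _ _)
    have hnorm : ‖∫ t in (0:ℝ)..x,
        spps w1 w2 n t * (if (n + 1) % 2 = 1 then w1 t else w2 t)‖ ≤
        |∫ t in (0:ℝ)..x, C ^ (n + 1) * |t| ^ n| :=
      intervalIntegral.norm_integral_le_abs_of_norm_le
        (MeasureTheory.ae_restrict_iff' measurableSet_uIoc |>.mpr
          (Filter.Eventually.of_forall hbd)) hgint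
    rw [intervalIntegral.integral_const_mul, integral_abs_pow] at hnorm
    rw [spps_succ, norm_mul]
    have hn1 : ‖((n : ℂ) + 1)‖ = (n : ℝ) + 1 := by
      rw [show ((n:ℂ)+1) = ((n+1 : ℕ) : ℂ) by push_cast; ring, Complex.norm_natCast]
      push_cast; ring
    rw [hn1]
    calc ((n:ℝ) + 1) * ‖∫ t in (0:ℝ)..x,
          spps w1 w2 n t * (if (n + 1) % 2 = 1 then w1 t else w2 t)‖
        ≤ ((n:ℝ) + 1) * |C ^ (n + 1) * (|x| ^ n * x / (n + 1))| := by
          apply mul_le_mul_of_nonneg_left hnorm; positivity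
      _ = C ^ (n + 1) * |x| ^ (n + 1) := by
          rw [abs_mul, abs_div, abs_mul,
            abs_of_nonneg (by positivity : (0:ℝ) ≤ C ^ (n+1)),
            abs_of_nonneg (by positivity : (0:ℝ) ≤ |x| ^ n),
            abs_of_nonneg (by positivity : (0:ℝ) ≤ (n:ℝ)+1)]
          rw [pow_succ]
          have hne : (n:ℝ) + 1 ≠ 0 := by positivity
          field_simp
          rw [pow_succ |x| n]; ring
end props

lemma tsum_hasDerivAt_of_bounds {s : Set ℝ} (hs : IsOpen s) (T T' : ℕ → ℝ → ℂ) (u : ℕ → ℝ)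
    (hu : Summable u) (hT' : ∀ (k : ℕ), ∀ x ∈ s, ‖T' k x‖ ≤ u k)
    (hderiv : ∀ (k : ℕ), ∀ x ∈ s, HasDerivAt (T k) (T' k x) x)
    (hsum : ∀ x ∈ s, Summable (fun k => T k x)) {x : ℝ} (hx : x ∈ s) :
    HasDerivAt (fun y => ∑' k, T k y) (∑' k, T' k x) x := by
  apply hasDerivAt_of_tendstoLocallyUniformlyOn hs
    (f := fun (n : ℕ) (y : ℝ) => ∑ k ∈ Finset.range n, T k y)
    (f' := fun (n : ℕ) (y : ℝ) => ∑ k ∈ Finset.range n, T' k y)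
    ((tendstoUniformlyOn_tsum_nat hu (fun n y hy => hT' n y hy)).tendstoLocallyUniformlyOn) ?_ ?_ hx
  · filter_upwards with n y hy
    exact HasDerivAt.fun_sum (fun k _ => hderiv k y hy)
  · intro y hy
    exact (hsum y hy).hasSum.tendsto_sum_nat

/-- Dirichlet spectral problem: `ω²` is an eigenvalue of `(pu')' + qu = ω²u`,
`u(0) = u(1) = 0`, iff `ω` is a zero of the analytic function
`κ(ω) = ∑_{even m} g₀(1) X⁽ᵐ⁺¹⁾(1)/(m+1)! ωᵐ`. -/
theorem dirichlet_spectral_characterization (a b : ℝ) (ha : a < 0) (hb : 1 < b)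
    (ω : ℂ) (p q g0 : ℝ → ℂ)
    (hp : ContDiffOn ℝ 1 p (Set.Ioo a b))
    (hp0 : ∀ x ∈ Set.Ioo a b, p x ≠ 0)
    (hq : ContinuousOn q (Set.Ioo a b))
    (hg : ContDiffOn ℝ 2 g0 (Set.Ioo a b))
    (hg0 : ∀ x ∈ Set.Ioo a b, g0 x ≠ 0)
    (heq : ∀ x ∈ Set.Ioo a b,
      deriv (fun y => p y * deriv g0 y) x + q x * g0 x = 0)
    (hbd : ∃ M : ℝ, ∀ x ∈ Set.Ioo a b,
      ‖g0 x‖ ≤ M ∧ ‖(g0 x)⁻¹‖ ≤ M ∧ ‖p x‖ ≤ M ∧ ‖(p x)⁻¹‖ ≤ M) :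
    (∃ u : ℝ → ℂ, ContDiffOn ℝ 2 u (Set.Ioo a b) ∧
      (∃ x ∈ Set.Icc (0 : ℝ) 1, u x ≠ 0) ∧
      (∀ x ∈ Set.Ioo a b,
        deriv (fun y => p y * deriv u y) x + q x * u x = ω ^ 2 * u x) ∧
      u 0 = 0 ∧ u 1 = 0) ↔
    (∑' k : ℕ, g0 1 *
        spps (fun t => (p t * g0 t ^ 2)⁻¹) (fun t => g0 t ^ 2) (2 * k + 1) 1 /
        ((2 * k + 1)! : ℂ) * ω ^ (2 * k)) = 0 := by
  obtain ⟨M, hM⟩ := hbd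
  have hb0 : (0:ℝ) < b := by linarith
  set s : Set ℝ := Set.Ioo a b with hs_def
  have hs : IsOpen s := isOpen_Ioo
  have h0s : (0:ℝ) ∈ s := ⟨ha, hb0⟩
  have h1s : (1:ℝ) ∈ s := ⟨by linarith, hb⟩
  set w1 : ℝ → ℂ := fun t => (p t * g0 t ^ 2)⁻¹ with hw1def
  set w2 : ℝ → ℂ := fun t => g0 t ^ 2 with hw2def
  have hpc : ContinuousOn p s := hp.continuousOn
  have hgc : ContinuousOn g0 s := hg.continuousOn
  have hw2c : ContinuousOn w2 s := hgc.pow 2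
  have hpg2 : ∀ x ∈ s, p x * g0 x ^ 2 ≠ 0 :=
    fun x hx => mul_ne_zero (hp0 x hx) (pow_ne_zero 2 (hg0 x hx))
  have hw1c : ContinuousOn w1 s := (hpc.mul hw2c).inv₀ hpg2
  have hM0 : 0 ≤ M := le_trans (norm_nonneg _) (hM 0 h0s).1
  set C : ℝ := M ^ 3 + M ^ 2 with hCdef
  have hC0 : 0 ≤ C := by positivity
  have hCw1 : ∀ x ∈ s, ‖w1 x‖ ≤ C := by
    intro x hx
    have h1 : ‖w1 x‖ = ‖(p x)⁻¹‖ * ‖(g0 x)⁻¹‖ ^ 2 := by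
      simp only [hw1def, mul_inv, norm_mul, ← inv_pow, norm_pow]
    rw [h1]
    calc ‖(p x)⁻¹‖ * ‖(g0 x)⁻¹‖ ^ 2 ≤ M * M ^ 2 := by
          apply mul_le_mul (hM x hx).2.2.2 _ (by positivity) hM0
          exact pow_le_pow_left₀ (norm_nonneg _) (hM x hx).2.1 2
      _ ≤ C := by rw [hCdef]; nlinarith [sq_nonneg M, hM0]
  have hCw2 : ∀ x ∈ s, ‖w2 x‖ ≤ C := by
    intro x hx
    have h1 : ‖w2 x‖ = ‖g0 x‖ ^ 2 := by simp only [hw2def, norm_pow]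
    rw [h1]
    calc ‖g0 x‖ ^ 2 ≤ M ^ 2 := pow_le_pow_left₀ (norm_nonneg _) (hM x hx).1 2
      _ ≤ C := by rw [hCdef]; nlinarith [pow_nonneg hM0 3]
  -- continuity and derivative of all spps iterates
  have hprops := spps_cont_deriv ha hb0 hw1c hw2c
  have hbound := spps_bound ha hb0 hw1c hw2c hC0 hCw1 hCw2
  -- uniform bound on s
  set R : ℝ := max (-a) b with hRdef
  have hR0 : 0 ≤ R := le_trans hb0.le (le_max_right _ _)
  set D : ℝ := C * R with hDdef
  have hD0 : 0 ≤ D := mul_nonneg hC0 hR0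
  have hXb : ∀ n : ℕ, ∀ x ∈ s, ‖spps w1 w2 n x‖ ≤ D ^ n := by
    intro n x hx
    have hxR : |x| ≤ R := by
      rw [abs_le]
      constructor
      · have := hx.1; rw [hRdef]; have := le_max_left (-a) b; nlinarith [hx.1]
      · exact le_trans hx.2.le (le_max_right _ _)
    calc ‖spps w1 w2 n x‖ ≤ C ^ n * |x| ^ n := hbound n x hx
      _ ≤ C ^ n * R ^ n := by
          apply mul_le_mul_of_nonneg_left (pow_le_pow_left₀ (abs_nonneg x) hxR n) (by positivity)
      _ = D ^ n := by rw [hDdef, mul_pow]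
  -- series setup
  set z : ℝ := D ^ 2 * ‖ω‖ ^ 2 with hzdef
  have hz0 : 0 ≤ z := by positivity
  have hzsum : Summable (fun k : ℕ => z ^ k / (k ! : ℝ)) := Real.summable_pow_div_factorial z
  have hzpow : ∀ k : ℕ, z ^ k = D ^ (2 * k) * ‖ω‖ ^ (2 * k) := by
    intro k; rw [hzdef, mul_pow, ← pow_mul, ← pow_mul]
  -- the terms of the series
  set TF : ℕ → ℝ → ℂ := fun k x => spps w1 w2 (2 * k + 1) x / ((2 * k + 1)! : ℂ) * ω ^ (2 * k)
    with hTFdef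
  set TH : ℕ → ℝ → ℂ := fun k x => spps w1 w2 (2 * k) x / ((2 * k)! : ℂ) * ω ^ (2 * k)
    with hTHdef
  set TF' : ℕ → ℝ → ℂ := fun k x => w1 x * TH k x with hTF'def
  set TH' : ℕ → ℝ → ℂ := fun k x =>
    ((2 * k : ℕ) : ℂ) * spps w1 w2 (2 * k - 1) x * w2 x / ((2 * k)! : ℂ) * ω ^ (2 * k)
    with hTH'def
  have hfle : ∀ {m n : ℕ}, m ≤ n → ((m)! : ℝ) ≤ ((n)! : ℝ) :=
    fun h => Nat.cast_le.mpr (Nat.factorial_le h)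
  -- norm bounds
  have hTFb : ∀ (k : ℕ), ∀ x ∈ s, ‖TF k x‖ ≤ D * (z ^ k / (k ! : ℝ)) := by
    intro k x hx
    rw [hTFdef]
    simp only [norm_mul, norm_div, norm_pow, Complex.norm_natCast]
    calc ‖spps w1 w2 (2*k+1) x‖ / ((2*k+1)! : ℝ) * ‖ω‖ ^ (2*k)
        ≤ D ^ (2*k+1) / (k ! : ℝ) * ‖ω‖ ^ (2*k) := by
          apply mul_le_mul_of_nonneg_right _ (by positivity)
          exact div_le_div₀ (by positivity) (hXb (2*k+1) x hx) (by positivity)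
            (hfle (by omega))
      _ = D * (z ^ k / (k ! : ℝ)) := by
          rw [hzpow, pow_succ]
          ring
  have hTHb : ∀ (k : ℕ), ∀ x ∈ s, ‖TH k x‖ ≤ z ^ k / (k ! : ℝ) := by
    intro k x hx
    rw [hTHdef]
    simp only [norm_mul, norm_div, norm_pow, Complex.norm_natCast]
    calc ‖spps w1 w2 (2*k) x‖ / ((2*k)! : ℝ) * ‖ω‖ ^ (2*k)
        ≤ D ^ (2*k) / (k ! : ℝ) * ‖ω‖ ^ (2*k) := by
          apply mul_le_mul_of_nonneg_right _ (by positivity)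
          exact div_le_div₀ (by positivity) (hXb (2*k) x hx) (by positivity)
            (hfle (by omega))
      _ = z ^ k / (k ! : ℝ) := by rw [hzpow]; ring
  have hTF'b : ∀ (k : ℕ), ∀ x ∈ s, ‖TF' k x‖ ≤ C * (z ^ k / (k ! : ℝ)) := by
    intro k x hx
    rw [hTF'def]
    simp only [norm_mul]
    exact mul_le_mul (hCw1 x hx) (hTHb k x hx) (norm_nonneg _) hC0
  have hTH'b : ∀ (k : ℕ), ∀ x ∈ s,
      ‖TH' k x‖ ≤ C * D * ‖ω‖ ^ 2 * (z ^ (k - 1) / ((k - 1)! : ℝ)) := by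
    intro k x hx
    match k with
    | 0 => rw [hTH'def]; simp; positivity
    | (j+1) =>
      have h2j : 2 * (j + 1) - 1 = 2 * j + 1 := by omega
      have h2ne : (2 * (j+1) : ℝ) ≠ 0 := by positivity
      have hfacteq : ((2 * (j+1))! : ℝ) = (2 * (j+1) : ℝ) * ((2*j+1)! : ℝ) := by
        rw [show 2 * (j+1) = (2*j+1) + 1 from by omega, Nat.factorial_succ]
        push_cast; ring
      have e1 : ‖TH' (j+1) x‖ = (2*(j+1) : ℝ) * ‖spps w1 w2 (2*j+1) x‖ * ‖w2 x‖ /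
          ((2*(j+1))! : ℝ) * ‖ω‖ ^ (2*(j+1)) := by
        rw [hTH'def]
        simp only [h2j, norm_mul, norm_div, norm_pow, Complex.norm_natCast]
        push_cast; ring
      rw [e1]
      simp only [Nat.add_sub_cancel]
      have hnum : (2*(j+1) : ℝ) * ‖spps w1 w2 (2*j+1) x‖ * ‖w2 x‖ ≤
          (2*(j+1) : ℝ) * D ^ (2*j+1) * C := by
        have hA := hXb (2*j+1) x hx
        have hB := hCw2 x hx
        gcongr
      have hden : (2*(j+1) : ℝ) * (j ! : ℝ) ≤ ((2*(j+1))! : ℝ) := by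
        rw [hfacteq]
        exact mul_le_mul_of_nonneg_left (hfle (by omega)) (by positivity)
      calc (2*(j+1) : ℝ) * ‖spps w1 w2 (2*j+1) x‖ * ‖w2 x‖ /
            ((2*(j+1))! : ℝ) * ‖ω‖ ^ (2*(j+1))
          ≤ ((2*(j+1) : ℝ) * D ^ (2*j+1) * C) / ((2*(j+1) : ℝ) * (j ! : ℝ)) *
            ‖ω‖ ^ (2*(j+1)) := by
            apply mul_le_mul_of_nonneg_right _ (by positivity)
            exact div_le_div₀ (by positivity) hnum (by positivity) hden
        _ = C * D * ‖ω‖ ^ 2 * (z ^ j / (j ! : ℝ)) := by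
            rw [hzpow j]
            field_simp
            ring
  -- summability
  have hsumF : Summable (fun k : ℕ => D * (z ^ k / (k ! : ℝ))) := hzsum.mul_left D
  have hsumF' : Summable (fun k : ℕ => C * (z ^ k / (k ! : ℝ))) := hzsum.mul_left C
  have hsumH' : Summable (fun k : ℕ => C * D * ‖ω‖ ^ 2 * (z ^ (k-1) / ((k-1)! : ℝ))) := by
    apply Summable.mul_left
    apply (summable_nat_add_iff 1).mp
    simpa using hzsum
  have hTFsum : ∀ x ∈ s, Summable (fun k => TF k x) :=
    fun x hx => Summable.of_norm_bounded hsumF (fun k => hTFb k x hx)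
  have hTHsum : ∀ x ∈ s, Summable (fun k => TH k x) :=
    fun x hx => Summable.of_norm_bounded hzsum (fun k => hTHb k x hx)
  have hTH'sum : ∀ x ∈ s, Summable (fun k => TH' k x) :=
    fun x hx => Summable.of_norm_bounded hsumH' (fun k => hTH'b k x hx)
  -- term derivatives
  have hfne : ∀ n : ℕ, ((n)! : ℂ) ≠ 0 :=
    fun n => Nat.cast_ne_zero.mpr (Nat.factorial_ne_zero n)
  have hTFd : ∀ (k : ℕ), ∀ x ∈ s, HasDerivAt (TF k) (TF' k x) x := by
    intro k x hx
    have hX := (hprops (2*k)).2 x hx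
    rw [if_pos (by omega : (2*k+1) % 2 = 1)] at hX
    have h1 : HasDerivAt (TF k)
        ((((2*k : ℕ) : ℂ) + 1) * (spps w1 w2 (2*k) x * w1 x) / ((2*k+1)! : ℂ) * ω ^ (2*k)) x :=
      (hX.div_const _).mul_const _
    convert h1 using 1
    simp only [hTF'def, hTHdef]
    have e : ((2*k+1)! : ℂ) = (((2*k : ℕ) : ℂ) + 1) * ((2*k)! : ℂ) := by
      rw [Nat.factorial_succ]; push_cast; ring
    have h2 : (((2*k : ℕ) : ℂ) + 1) ≠ 0 := by
      have h3 : ((2*k+1 : ℕ) : ℂ) ≠ 0 := Nat.cast_ne_zero.mpr (by omega)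
      push_cast at h3; exact_mod_cast h3
    rw [e, mul_div_mul_left _ _ h2]
    ring
  have hTHd : ∀ (k : ℕ), ∀ x ∈ s, HasDerivAt (TH k) (TH' k x) x := by
    intro k x hx
    match k with
    | 0 =>
      have : TH 0 = fun _ : ℝ => (1 : ℂ) / ((0)! : ℂ) * ω ^ 0 := by
        funext y; simp only [hTHdef]; simp [spps_zero]
      rw [this]
      have h0 : TH' 0 x = 0 := by rw [hTH'def]; simp
      rw [h0]
      exact hasDerivAt_const x _
    | (j+1) =>
      have h2j' : 2 * (j + 1) = (2*j+1) + 1 := by omega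
      have hX := (hprops (2*j+1)).2 x hx
      rw [if_neg (by omega : ¬ ((2*j+1+1) % 2 = 1))] at hX
      have h1 : HasDerivAt (fun y => spps w1 w2 ((2*j+1)+1) y / (((2*j+1)+1)! : ℂ) * ω ^ (2*(j+1)))
          (((((2*j+1) : ℕ) : ℂ) + 1) * (spps w1 w2 (2*j+1) x * w2 x) / (((2*j+1)+1)! : ℂ)
            * ω ^ (2*(j+1))) x :=
        (hX.div_const _).mul_const _
      rw [show TH (j+1) = fun y => spps w1 w2 ((2*j+1)+1) y / (((2*j+1)+1)! : ℂ) * ω ^ (2*(j+1))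
        from by funext y; simp only [hTHdef]; rw [h2j']]
      convert h1 using 1
      simp only [hTH'def]
      rw [show 2*(j+1) - 1 = 2*j+1 from by omega, h2j']
      push_cast
      ring
  -- the two series
  set F : ℝ → ℂ := fun x => ∑' k, TF k x with hFdef
  set H : ℝ → ℂ := fun x => ∑' k, TH k x with hHdef
  have hFd : ∀ x ∈ s, HasDerivAt F (w1 x * H x) x := by
    intro x hx
    have h1 := tsum_hasDerivAt_of_bounds hs TF TF' _ hsumF' (fun k y hy => hTF'b k y hy)
      hTFd hTFsum hx
    have h2 : (∑' k, TF' k x) = w1 x * H x := by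
      simp only [hTF'def, hHdef]
      exact tsum_mul_left
    rwa [h2] at h1
  have hHtsum' : ∀ x ∈ s, (∑' k, TH' k x) = ω ^ 2 * w2 x * F x := by
    intro x hx
    rw [Summable.tsum_eq_zero_add (hTH'sum x hx)]
    have h0 : TH' 0 x = 0 := by simp only [hTH'def]; simp
    have hterm : ∀ j : ℕ, TH' (j + 1) x = ω ^ 2 * w2 x * TF j x := by
      intro j
      simp only [hTH'def, hTFdef]
      rw [show 2*(j+1) - 1 = 2*j+1 from by omega, show 2*(j+1) = (2*j+1)+1 from by omega]
      have e : (((2*j+1)+1)! : ℂ) = (((2*j+1)+1 : ℕ) : ℂ) * ((2*j+1)! : ℂ) := by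
        rw [Nat.factorial_succ]; push_cast; ring
      have hc : (((2*j+1)+1 : ℕ) : ℂ) ≠ 0 := Nat.cast_ne_zero.mpr (by omega)
      rw [e, mul_assoc (((2*j+1)+1 : ℕ) : ℂ), mul_div_mul_left _ _ hc]
      ring
    rw [h0, zero_add]
    calc (∑' j, TH' (j+1) x) = ∑' j, ω ^ 2 * w2 x * TF j x := by
          exact tsum_congr hterm
      _ = ω ^ 2 * w2 x * F x := by simp only [hFdef]; exact tsum_mul_left
  have hHd : ∀ x ∈ s, HasDerivAt H (ω ^ 2 * w2 x * F x) x := by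
    intro x hx
    have h1 := tsum_hasDerivAt_of_bounds hs TH TH' _ hsumH' (fun k y hy => hTH'b k y hy)
      hTHd hTHsum hx
    rwa [hHtsum' x hx] at h1
  have hFc : ContinuousOn F s :=
    continuousOn_of_forall_continuousAt fun x hx => (hFd x hx).continuousAt
  have hHc : ContinuousOn H s :=
    continuousOn_of_forall_continuousAt fun x hx => (hHd x hx).continuousAt
  -- values at 0
  have hF0 : F 0 = 0 := by
    simp only [hFdef]
    convert tsum_zero with k
    simp only [hTFdef]
    rw [spps_succ_at_zero]
    simp
  have hH0 : H 0 = 1 := by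
    simp only [hHdef]
    rw [tsum_eq_single 0 ?_]
    · simp only [hTHdef]; simp [spps_zero]
    · intro k hk
      obtain ⟨j, rfl⟩ := Nat.exists_eq_succ_of_ne_zero hk
      simp only [hTHdef]
      rw [show 2*(j+1) = (2*j+1)+1 from by omega, spps_succ_at_zero]
      simp
  -- the characteristic function is g0 1 * F 1
  have hκ : (∑' k : ℕ, g0 1 * spps w1 w2 (2 * k + 1) 1 / ((2 * k + 1)! : ℂ) * ω ^ (2 * k))
      = g0 1 * F 1 := by
    simp only [hFdef]
    rw [← tsum_mul_left (a := g0 1)]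
    apply tsum_congr
    intro k
    simp only [hTFdef]
    ring
  -- u2 := g0 * F
  set u2 : ℝ → ℂ := fun x => g0 x * F x with hu2def
  have hgdiff : ∀ x ∈ s, DifferentiableAt ℝ g0 x := fun x hx =>
    ((hg.differentiableOn (by norm_num)).differentiableAt (hs.mem_nhds hx))
  have hg1 : ContDiffOn ℝ 1 (deriv g0) s := by
    have h2 := (contDiffOn_succ_iff_deriv_of_isOpen (n := 1) hs).mp
      (by exact_mod_cast hg)
    exact h2.2.2
  have hg'diff : ∀ x ∈ s, DifferentiableAt ℝ (deriv g0) x := fun x hx =>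
    ((hg1.differentiableOn (by norm_num)).differentiableAt (hs.mem_nhds hx))
  have hpdiff : ∀ x ∈ s, DifferentiableAt ℝ p x := fun x hx =>
    ((hp.differentiableOn (by norm_num)).differentiableAt (hs.mem_nhds hx))
  have hu2d : ∀ x ∈ s, HasDerivAt u2 (deriv g0 x * F x + g0 x * (w1 x * H x)) x := by
    intro x hx
    exact ((hgdiff x hx).hasDerivAt.mul (hFd x hx))
  have hu2deriv : ∀ x ∈ s, deriv u2 x = deriv g0 x * F x + g0 x * (w1 x * H x) :=
    fun x hx => (hu2d x hx).deriv
  -- p * u2' equals Φ on s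
  set Φ : ℝ → ℂ := fun y => (p y * deriv g0 y) * F y + (g0 y)⁻¹ * H y with hΦdef
  have hPu2 : ∀ y ∈ s, p y * deriv u2 y = Φ y := by
    intro y hy
    rw [hu2deriv y hy]
    simp only [hΦdef, hw1def]
    field_simp [hp0 y hy, hg0 y hy]
  have hΦd : ∀ x ∈ s, HasDerivAt Φ
      (deriv (fun y => p y * deriv g0 y) x * F x + (p x * deriv g0 x) * (w1 x * H x) +
        ((-((g0 x) ^ 2)⁻¹ * deriv g0 x) * H x + (g0 x)⁻¹ * (ω ^ 2 * w2 x * F x))) x := by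
    intro x hx
    have h1 : HasDerivAt (fun y => p y * deriv g0 y)
        (deriv (fun y => p y * deriv g0 y) x) x :=
      (((hpdiff x hx).mul (hg'diff x hx))).hasDerivAt
    have hinv : HasDerivAt (fun y => (g0 y)⁻¹) (-((g0 x) ^ 2)⁻¹ * deriv g0 x) x :=
      HasDerivAt.comp x (hasDerivAt_inv (hg0 x hx)) (hgdiff x hx).hasDerivAt
    exact (h1.mul (hFd x hx)).add (hinv.mul (hHd x hx))
  have hu2P : ∀ x ∈ s, HasDerivAt (fun y => p y * deriv u2 y)
      (deriv (fun y => p y * deriv g0 y) x * F x + (p x * deriv g0 x) * (w1 x * H x) +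
        ((-((g0 x) ^ 2)⁻¹ * deriv g0 x) * H x + (g0 x)⁻¹ * (ω ^ 2 * w2 x * F x))) x := by
    intro x hx
    apply (hΦd x hx).congr_of_eventuallyEq
    filter_upwards [hs.mem_nhds hx] with y hy
    exact hPu2 y hy
  have hu2eqn : ∀ x ∈ s,
      deriv (fun y => p y * deriv u2 y) x + q x * u2 x = ω ^ 2 * u2 x := by
    intro x hx
    rw [(hu2P x hx).deriv]
    have hq0 : deriv (fun y => p y * deriv g0 y) x = -(q x * g0 x) := by
      have h := heq x hx; linear_combination h
    rw [hq0]
    simp only [hu2def, hw1def, hw2def]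
    field_simp [hp0 x hx, hg0 x hx]
    ring
  -- regularity of u2
  have hgC1 : ContDiffOn ℝ 1 g0 s := hg.of_le (by norm_num)
  have hFC1 : ContDiffOn ℝ 1 F s := by
    rw [show (1 : WithTop ℕ∞) = 0 + 1 from by norm_num, contDiffOn_succ_iff_deriv_of_isOpen hs]
    refine ⟨fun x hx => (hFd x hx).differentiableAt.differentiableWithinAt, by simp, ?_⟩
    rw [contDiffOn_zero]
    apply ContinuousOn.congr (hw1c.mul hHc)
    intro x hx
    exact (hFd x hx).deriv
  have hHC1 : ContDiffOn ℝ 1 H s := by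
    rw [show (1 : WithTop ℕ∞) = 0 + 1 from by norm_num, contDiffOn_succ_iff_deriv_of_isOpen hs]
    refine ⟨fun x hx => (hHd x hx).differentiableAt.differentiableWithinAt, by simp, ?_⟩
    rw [contDiffOn_zero]
    apply ContinuousOn.congr ((continuousOn_const (c := ω ^ 2)).mul hw2c |>.mul hFc)
    intro x hx
    exact (hHd x hx).deriv
  have hw1C1 : ContDiffOn ℝ 1 w1 s := by
    simp only [hw1def]
    exact (hp.mul ((hg.of_le (by norm_num)).pow 2)).inv hpg2
  have hu2C2 : ContDiffOn ℝ 2 u2 s := by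
    rw [show (2 : WithTop ℕ∞) = 1 + 1 from by norm_num, contDiffOn_succ_iff_deriv_of_isOpen hs]
    refine ⟨fun x hx => (hu2d x hx).differentiableAt.differentiableWithinAt, by simp, ?_⟩
    apply ContDiffOn.congr ((hg1.mul hFC1).add (hgC1.mul (hw1C1.mul hHC1)))
    intro x hx
    exact hu2deriv x hx
  -- values of u2
  have hu2_0 : u2 0 = 0 := by simp only [hu2def]; rw [hF0, mul_zero]
  have hu2'0 : HasDerivAt u2 (g0 0 * (p 0 * g0 0 ^ 2)⁻¹) 0 := by
    have h := hu2d 0 h0s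
    rw [hF0, hH0] at h
    convert h using 1
    simp only [hw1def]
    ring
  have hd_ne : g0 0 * (p 0 * g0 0 ^ 2)⁻¹ ≠ 0 :=
    mul_ne_zero (hg0 0 h0s) (inv_ne_zero (hpg2 0 h0s))
  have hu2_nontriv : ∃ x ∈ Icc (0:ℝ) 1, u2 x ≠ 0 := by
    by_contra hcon
    push_neg at hcon
    have hmem : (0:ℝ) ∈ Icc (0:ℝ) 1 := ⟨le_refl 0, zero_le_one⟩
    have hu : UniqueDiffWithinAt ℝ (Icc (0:ℝ) 1) 0 := uniqueDiffOn_Icc zero_lt_one 0 hmem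
    have h2 : HasDerivWithinAt (fun _ : ℝ => (0:ℂ)) (g0 0 * (p 0 * g0 0 ^ 2)⁻¹)
        (Icc (0:ℝ) 1) 0 :=
      hu2'0.hasDerivWithinAt.congr (fun y hy => (hcon y hy).symm) (hcon 0 hmem).symm
    have h3 := h2.derivWithin hu
    have h4 := (hasDerivWithinAt_const (0:ℝ) (Icc (0:ℝ) 1) (0:ℂ)).derivWithin hu
    exact hd_ne (h3.symm.trans h4)
  rw [hκ]
  constructor
  · -- forward: eigenfunction exists → g0 1 * F 1 = 0
    rintro ⟨u, huC2, ⟨x0, hx0, hux0⟩, hueq, hu0, hu1⟩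
    set α : ℝ := a / 2 with hαdef
    set β : ℝ := (1 + b) / 2 with hβdef
    have hαa : a < α := by rw [hαdef]; linarith
    have hα0 : α < 0 := by rw [hαdef]; linarith
    have hβ1 : (1:ℝ) < β := by rw [hβdef]; linarith
    have hβb : β < b := by rw [hβdef]; linarith
    have hIccs : Icc α β ⊆ s := fun t ht => ⟨lt_of_lt_of_le hαa ht.1, lt_of_le_of_lt ht.2 hβb⟩
    have hIoos : Ioo α β ⊆ s := fun t ht => hIccs (Ioo_subset_Icc_self ht)
    obtain ⟨Q, hQ⟩ :=
      (isCompact_Icc (a := α) (b := β)).exists_bound_of_continuousOn (hq.mono hIccs)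
    have h0αβ : (0:ℝ) ∈ Icc α β := ⟨hα0.le, by linarith⟩
    have hQ0 : 0 ≤ Q := le_trans (norm_nonneg _) (hQ 0 h0αβ)
    set K0 : ℝ := max M (‖ω‖ ^ 2 + Q) with hK0def
    set K : NNReal := K0.toNNReal with hKdef
    have hKK : K0 ≤ (K : ℝ) := Real.le_coe_toNNReal K0
    set v : ℝ → ℂ × ℂ → ℂ × ℂ := fun t z =>
      if t ∈ Icc α β then ((p t)⁻¹ * z.2, (ω ^ 2 - q t) * z.1) else 0 with hv_def
    have hlip : ∀ t, LipschitzWith K (v t) := by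
      intro t
      by_cases ht : t ∈ Icc α β
      · apply LipschitzWith.of_dist_le_mul
        intro z w
        simp only [hv_def, if_pos ht]
        rw [Prod.dist_eq]
        have hts : t ∈ s := hIccs ht
        apply max_le
        · have e : dist ((p t)⁻¹ * z.2) ((p t)⁻¹ * w.2) = ‖(p t)⁻¹‖ * dist z.2 w.2 := by
            rw [dist_eq_norm, dist_eq_norm, ← mul_sub, norm_mul]
          rw [e]
          have h1 : ‖(p t)⁻¹‖ ≤ (K : ℝ) :=
            le_trans (hM t hts).2.2.2 (le_trans (le_max_left _ _) hKK)
          have h2 : dist z.2 w.2 ≤ dist z w := by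
            rw [Prod.dist_eq]; exact le_max_right _ _
          exact mul_le_mul h1 h2 dist_nonneg (NNReal.coe_nonneg K)
        · have e : dist ((ω ^ 2 - q t) * z.1) ((ω ^ 2 - q t) * w.1) =
              ‖ω ^ 2 - q t‖ * dist z.1 w.1 := by
            rw [dist_eq_norm, dist_eq_norm, ← mul_sub, norm_mul]
          rw [e]
          have h1 : ‖ω ^ 2 - q t‖ ≤ (K : ℝ) := by
            calc ‖ω ^ 2 - q t‖ ≤ ‖ω ^ 2‖ + ‖q t‖ := norm_sub_le _ _
              _ ≤ ‖ω‖ ^ 2 + Q := by rw [norm_pow]; exact add_le_add le_rfl (hQ t ht)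
              _ ≤ (K : ℝ) := le_trans (le_max_right _ _) hKK
          have h2 : dist z.1 w.1 ≤ dist z w := by
            rw [Prod.dist_eq]; exact le_max_left _ _
          exact mul_le_mul h1 h2 dist_nonneg (NNReal.coe_nonneg K)
      · have e : v t = fun _ => 0 := by funext z; simp only [hv_def]; rw [if_neg ht]
        rw [e]
        exact (LipschitzWith.const 0).weaken zero_le
    -- the solutions as systems
    have hudiff : ∀ x ∈ s, DifferentiableAt ℝ u x := fun x hx =>
      ((huC2.differentiableOn (by norm_num)).differentiableAt (hs.mem_nhds hx))
    have hu1C : ContDiffOn ℝ 1 (deriv u) s :=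
      ((contDiffOn_succ_iff_deriv_of_isOpen (n := 1) hs).mp (by exact_mod_cast huC2)).2.2
    have hu'diff : ∀ x ∈ s, DifferentiableAt ℝ (deriv u) x := fun x hx =>
      ((hu1C.differentiableOn (by norm_num)).differentiableAt (hs.mem_nhds hx))
    have hpu' : ∀ x ∈ s, HasDerivAt (fun y => p y * deriv u y) ((ω ^ 2 - q x) * u x) x := by
      intro x hx
      have hD : HasDerivAt (fun y => p y * deriv u y)
          (deriv (fun y => p y * deriv u y) x) x :=
        ((hpdiff x hx).mul (hu'diff x hx)).hasDerivAt
      have he : deriv (fun y => p y * deriv u y) x = (ω ^ 2 - q x) * u x := by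
        have h := hueq x hx; linear_combination h
      rwa [he] at hD
    have hpu2' : ∀ x ∈ s, HasDerivAt (fun y => p y * deriv u2 y) ((ω ^ 2 - q x) * u2 x) x := by
      intro x hx
      have hD := hu2P x hx
      have he : deriv (fun y => p y * deriv g0 y) x * F x + p x * deriv g0 x * (w1 x * H x) +
          (-(g0 x ^ 2)⁻¹ * deriv g0 x * H x + (g0 x)⁻¹ * (ω ^ 2 * w2 x * F x)) =
          (ω ^ 2 - q x) * u2 x := by
        have h := hu2eqn x hx
        rw [← (hu2P x hx).deriv]
        linear_combination h
      rwa [he] at hD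
    set c : ℂ := g0 0 * (p 0 * deriv u 0) with hcdef
    set Y : ℝ → ℂ × ℂ := fun t => (u t, p t * deriv u t) with hYdef
    set Z : ℝ → ℂ × ℂ := fun t => (c * u2 t, c * (p t * deriv u2 t)) with hZdef
    have hYd : ∀ t ∈ Ioo α β, HasDerivAt Y (v t (Y t)) t ∧ Y t ∈ (univ : Set (ℂ × ℂ)) := by
      intro t ht
      have hts : t ∈ s := hIoos ht
      refine ⟨?_, trivial⟩
      have h1 : HasDerivAt Y (deriv u t, (ω ^ 2 - q t) * u t) t :=
        ((hudiff t hts).hasDerivAt.prodMk (hpu' t hts))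
      have h2 : v t (Y t) = (deriv u t, (ω ^ 2 - q t) * u t) := by
        simp only [hv_def, hYdef, if_pos (Ioo_subset_Icc_self ht), Prod.mk.injEq]
        exact ⟨inv_mul_cancel_left₀ (hp0 t hts) _, trivial⟩
      rw [h2]; exact h1
    have hZd : ∀ t ∈ Ioo α β, HasDerivAt Z (v t (Z t)) t ∧ Z t ∈ (univ : Set (ℂ × ℂ)) := by
      intro t ht
      have hts : t ∈ s := hIoos ht
      refine ⟨?_, trivial⟩
      have hu2t : HasDerivAt u2 (deriv u2 t) t := by
        rw [hu2deriv t hts]; exact hu2d t hts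
      have hA : HasDerivAt (fun y => c * u2 y) (c * deriv u2 t) t := hu2t.const_mul c
      have hB : HasDerivAt (fun y => c * (p y * deriv u2 y))
          (c * ((ω ^ 2 - q t) * u2 t)) t := (hpu2' t hts).const_mul c
      have h1 : HasDerivAt Z (c * deriv u2 t, c * ((ω ^ 2 - q t) * u2 t)) t := hA.prodMk hB
      have h2 : v t (Z t) = (c * deriv u2 t, c * ((ω ^ 2 - q t) * u2 t)) := by
        simp only [hv_def, hZdef, if_pos (Ioo_subset_Icc_self ht), Prod.mk.injEq]
        constructor
        · rw [show (p t)⁻¹ * (c * (p t * deriv u2 t)) =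
            (p t)⁻¹ * p t * (c * deriv u2 t) from by ring,
            inv_mul_cancel₀ (hp0 t hts), one_mul]
        · ring
      rw [h2]; exact h1
    have h0mem : (0:ℝ) ∈ Ioo α β := ⟨hα0, by linarith⟩
    have h1mem : (1:ℝ) ∈ Ioo α β := ⟨by linarith, hβ1⟩
    have hinit : Y 0 = Z 0 := by
      simp only [hYdef, hZdef, Prod.mk.injEq]
      constructor
      · rw [hu0, hu2_0, mul_zero]
      · have hdu2 : deriv u2 0 = g0 0 * (p 0 * g0 0 ^ 2)⁻¹ := hu2'0.deriv
        rw [hdu2, hcdef]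
        field_simp [hp0 0 h0s, hg0 0 h0s]
    have huniq := ODE_solution_unique_of_mem_Ioo (v := v) (s := fun _ => univ)
      (fun t _ => (hlip t).lipschitzOnWith) h0mem hYd hZd hinit
    have hcne : c ≠ 0 := by
      intro hc0
      have hx0' : x0 ∈ Ioo α β := ⟨lt_of_lt_of_le hα0 hx0.1, lt_of_le_of_lt hx0.2 hβ1⟩
      have hYZ := huniq hx0'
      apply hux0
      have h' : u x0 = c * u2 x0 := (Prod.ext_iff.mp hYZ).1
      rw [h', hc0, zero_mul]
    have hYZ1 := huniq h1mem
    have h' : u 1 = c * u2 1 := (Prod.ext_iff.mp hYZ1).1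
    have hu21 : u2 1 = 0 := by
      have hc1 : c * u2 1 = 0 := by rw [← h', hu1]
      exact (mul_eq_zero.mp hc1).resolve_left hcne
    exact hu21
  · -- backward
    intro hF1
    exact ⟨u2, hu2C2, hu2_nontriv, hu2eqn, hu2_0, hF1⟩
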